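/- Let (R,M) be a discrete valuation domain with finite residue field and quotient field K. Let f, g ∈ K[x] be monic and let F, G ∈ Int(R) be image-primitive with F·K[x] = f·K[x] and G·K[x] = g·K[x]. Then for every n ≥ 1: g = f^n if and only if G is associated to F^n in Int(R). -/

import Mathlib

open Polynomial

section Defs

variable (R K : Type*)

/-- `Int(R) = {F ∈ K[x] ∣ F(R) ⊆ R}`, the ring of integer-valued polynomials,
as a subring of `K[x]`. -/
def intPoly [CommRing R] [CommRing K] [Algebra R K] : Subring (Polynomial K) where
  carrier := {F | ∀ r : R, ∃ a : R, F.eval (algebraMap R K r) = algebraMap R K a}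
  mul_mem' := by
    rintro f g hf hg r
    obtain ⟨a, ha⟩ := hf r
    obtain ⟨b, hb⟩ := hg r
    exact ⟨a * b, by simp [ha, hb]⟩
  one_mem' := fun r => ⟨1, by simp⟩
  add_mem' := by
    rintro f g hf hg r
    obtain ⟨a, ha⟩ := hf r
    obtain ⟨b, hb⟩ := hg r
    exact ⟨a + b, by simp [ha, hb]⟩
  zero_mem' := fun r => ⟨0, by simp⟩
  neg_mem' := by
    rintro f hf r
    obtain ⟨a, ha⟩ := hf r
    exact ⟨-a, by simp [ha]⟩

/-- Polynomials with coefficients in `R` are integer-valued. -/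
theorem map_mem_intPoly [CommRing R] [CommRing K] [Algebra R K] (f : Polynomial R) :
    f.map (algebraMap R K) ∈ intPoly R K :=
  fun r => ⟨f.eval r, by rw [Polynomial.eval_map, Polynomial.eval₂_at_apply]⟩

/-- An element `d` of a commutative monoid is absolutely irreducible if it is irreducible
and, for every `n ≥ 1`, the only factorization of `d ^ n` into irreducibles is, up to order
and unit factors, `d ⋯ d` (`n` copies). -/
def AbsolutelyIrreducible {α : Type*} [CommMonoid α] (d : α) : Prop :=
  Irreducible d ∧ ∀ n : ℕ, 1 ≤ n → ∀ l : Multiset α, (∀ a ∈ l, Irreducible a) →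
    l.prod = d ^ n → Multiset.card l = n ∧ ∀ a ∈ l, Associated a d

/-- The fixed divisor of a polynomial `f ∈ R[x]`: the ideal of `R` generated by the
values of `f` on `R`. -/
def fixDiv [CommRing R] (f : Polynomial R) : Ideal R :=
  Ideal.span (Set.range fun a => f.eval a)

/-- The fixed divisor of an integer-valued polynomial `F ∈ Int(R)`: the ideal of `R`
generated by (the elements of `R` representing) the values of `F` on `R`. -/
def fixDivK [CommRing R] [CommRing K] [Algebra R K] (F : Polynomial K) : Ideal R :=
  Ideal.span {a : R | ∃ r : R, F.eval (algebraMap R K r) = algebraMap R K a}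

/-- The (normalized additive) valuation of a nonzero element of a discrete valuation
ring: the largest `n` such that `x ∈ M ^ n`, where `M` is the maximal ideal. -/
noncomputable def mval [CommRing R] [IsLocalRing R] (x : R) : ℕ :=
  sSup {n : ℕ | x ∈ IsLocalRing.maximalIdeal R ^ n}

open scoped Classical in
/-- The valuation `v : R → ℕ∞`, with `v 0 = ⊤`. -/
noncomputable def vR [CommRing R] [IsLocalRing R] (x : R) : ℕ∞ :=
  if x = 0 then ⊤ else (mval R x : ℕ∞)

open scoped Classical in
/-- The valuation extended to the quotient field `K`, with `v 0 = ⊤`. -/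
noncomputable def vK [CommRing R] [IsLocalRing R] [CommRing K] [Algebra R K]
    [IsLocalization (nonZeroDivisors R) K] (x : K) : WithTop ℤ :=
  if x = 0 then ⊤
  else (((mval R (IsLocalization.sec (nonZeroDivisors R) x).1 : ℤ) -
        (mval R ((IsLocalization.sec (nonZeroDivisors R) x).2 : R) : ℤ) : ℤ) : WithTop ℤ)

/-- The residue class `s + M ^ n` of `s` modulo the `n`-th power of the maximal ideal. -/
def resClass [CommRing R] [IsLocalRing R] (s : R) (n : ℕ) : Set R :=
  {x | x - s ∈ IsLocalRing.maximalIdeal R ^ n}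

/-- A finite set `S ⊆ R` is balanced if, letting `n s` for each `s ∈ S` be the minimal
non-negative integer with `(s + M ^ (n s)) ∩ S = {s}`, the residue classes `s + M ^ (n s)`
(`s ∈ S`) are pairwise disjoint and cover `R`. -/
def IsBalanced [CommRing R] [IsLocalRing R] (S : Finset R) : Prop :=
  S.Nonempty ∧
  ∃ n : R → ℕ,
    (∀ s ∈ S, resClass R s (n s) ∩ (S : Set R) = {s} ∧
      ∀ k : ℕ, resClass R s k ∩ (S : Set R) = {s} → n s ≤ k) ∧
    (∀ s ∈ S, ∀ t ∈ S, s ≠ t → Disjoint (resClass R s (n s)) (resClass R t (n t))) ∧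
    (⋃ s ∈ S, resClass R s (n s)) = Set.univ

/-- `ρ` describes the `M`-adic partition `C_S` associated to `S`: the partition of `R`
into the residue classes `s + M ^ (ρ s)`, `s ∈ S`, such that each block contains both a
residue class of `M ^ (ρ s + 1)` intersecting `S` and one disjoint from `S`. -/
def IsSPartition [CommRing R] [IsLocalRing R] (S : Finset R) (ρ : R → ℕ) : Prop :=
  (⋃ s ∈ S, resClass R s (ρ s)) = Set.univ ∧
  (∀ s ∈ S, ∀ t ∈ S,
    resClass R s (ρ s) = resClass R t (ρ t) ∨
      Disjoint (resClass R s (ρ s)) (resClass R t (ρ t))) ∧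
  (∀ s ∈ S,
    (∃ u : R, resClass R u (ρ s + 1) ⊆ resClass R s (ρ s) ∧
      (resClass R u (ρ s + 1) ∩ (S : Set R)).Nonempty) ∧
    (∃ u : R, resClass R u (ρ s + 1) ⊆ resClass R s (ρ s) ∧
      resClass R u (ρ s + 1) ∩ (S : Set R) = ∅))

/-- `S'` is a balanced set associated to `S` (relative to the partition data `ρ` of `C_S`):
`S' ⊆ S` is balanced, consists of one representative per block of `C_S`, and its associated
partition `C_{S'}` coincides with `C_S`. -/
def IsAssociatedBalancedSubset [CommRing R] [IsLocalRing R] (S S' : Finset R) (ρ : R → ℕ) :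
    Prop :=
  S' ⊆ S ∧ IsBalanced R S' ∧
  (∀ s ∈ S', ∀ t ∈ S', s ≠ t → Disjoint (resClass R s (ρ s)) (resClass R t (ρ t))) ∧
  (⋃ s ∈ S', resClass R s (ρ s)) = Set.univ

open scoped Classical in
/-- The partition matrix of the partition `{s + M ^ (ρ s) : s ∈ S}`: diagonal entries
`ρ s`, off-diagonal entries `v (s - t)`. -/
noncomputable def partitionMatrix [CommRing R] [IsLocalRing R] (S : Finset R) (ρ : R → ℕ) :
    Matrix {x // x ∈ S} {x // x ∈ S} ℤ :=
  Matrix.of fun s t =>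
    if (s : R) = (t : R) then (ρ (s : R) : ℤ) else (mval R ((s : R) - (t : R)) : ℤ)

/-- `m` is the vector of multiplicities of the equalizing polynomial of `S`: the unique
vector of positive integers with gcd `1` such that `A · m = e · (1, …, 1)ᵀ` for some
non-negative integer `e`, where `A` is the partition matrix. -/
def IsEqualizingVector [CommRing R] [IsLocalRing R] (S : Finset R) (ρ : R → ℕ) (m : R → ℕ) :
    Prop :=
  (∀ s ∈ S, 0 < m s) ∧ S.gcd m = 1 ∧
  ∃ e : ℕ, ∀ s : {x // x ∈ S},
    (∑ t : {x // x ∈ S}, partitionMatrix R S ρ s t * (m (t : R) : ℤ)) = (e : ℤ)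

/-- `f` is the equalizing polynomial of `S`. -/
def IsEqualizingPoly [CommRing R] [IsLocalRing R] (S : Finset R) (f : Polynomial R) : Prop :=
  ∃ (ρ : R → ℕ) (m : R → ℕ), IsSPartition R S ρ ∧ IsEqualizingVector R S ρ m ∧
    f = ∏ s ∈ S, (Polynomial.X - Polynomial.C s) ^ m s

/-- The posh set of `f ∈ R[x]`: the set of `r ∈ R` where `v (f r)` exceeds
`min_{t ∈ R} v (f t)`. -/
noncomputable def poshR [CommRing R] [IsLocalRing R] (f : Polynomial R) : Set R :=
  {r : R | (⨅ t : R, vR R (f.eval t)) < vR R (f.eval r)}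

/-- The posh set of `F ∈ K[x]`: the set of `r ∈ R` where `v (F r)` exceeds
`min_{t ∈ R} v (F t)`. -/
def poshK [CommRing R] [IsLocalRing R] [CommRing K] [Algebra R K]
    [IsLocalization (nonZeroDivisors R) K] (F : Polynomial K) : Set R :=
  {r : R | ∃ t : R, vK R K (F.eval (algebraMap R K t)) < vK R K (F.eval (algebraMap R K r))}

/-- `r` lies in an `S`-poor neighborhood of the partition `C_S` (described by `ρ`):
a residue class `r + M ^ (ρ s + 1)` disjoint from `S` inside a block `s + M ^ (ρ s)`. -/
def IsPoorElt [CommRing R] [IsLocalRing R] (S : Finset R) (ρ : R → ℕ) (r : R) : Prop :=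
  ∃ s ∈ S, r ∈ resClass R s (ρ s) ∧ resClass R r (ρ s + 1) ∩ (S : Set R) = ∅

/-- The rich set of `S`: the union of the `S`-rich neighborhoods `s + M ^ (ρ s + 1)`,
`s ∈ S`. -/
def richSet [CommRing R] [IsLocalRing R] (S : Finset R) (ρ : R → ℕ) : Set R :=
  ⋃ s ∈ S, resClass R s (ρ s + 1)

/-- `a` is an `M`-ordering (`P`-ordering) of `R`. -/
def IsMOrdering [CommRing R] [IsLocalRing R] (a : ℕ → R) : Prop :=
  ∀ k : ℕ, ∀ x : R,
    vR R (∏ i ∈ Finset.range k, (a k - a i)) ≤ vR R (∏ i ∈ Finset.range k, (x - a i))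

end Defs

lemma exists_unit_value (R K : Type*) [CommRing R] [IsLocalRing R] [CommRing K] [Algebra R K]
    (F : Polynomial K) (hprim : fixDivK R K F = ⊤) :
    ∃ (r a : R), IsUnit a ∧ F.eval (algebraMap R K r) = algebraMap R K a := by
  by_contra h
  push_neg at h
  have hle : fixDivK R K F ≤ IsLocalRing.maximalIdeal R := by
    rw [fixDivK, Ideal.span_le]
    rintro a ⟨r, hr⟩
    exact fun hu => h r a hu hr
  rw [hprim] at hle
  exact IsLocalRing.maximalIdeal.isMaximal R |>.ne_top (top_le_iff.mp hle)

/-- Let `f, g ∈ K[x]` be monic and `F, G ∈ Int(R)` image-primitive with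
`F·K[x] = f·K[x]` and `G·K[x] = g·K[x]`. Then for `n ≥ 1`: `g = f ^ n` iff `G` is
associated to `F ^ n` in `Int(R)`. -/
theorem statement9 (R K : Type*) [CommRing R] [IsDomain R] [IsDiscreteValuationRing R]
    [Finite (IsLocalRing.ResidueField R)]
    [Field K] [Algebra R K] [IsFractionRing R K]
    (f g : Polynomial K) (hf : f.Monic) (hg : g.Monic)
    (F G : Polynomial K) (hFmem : F ∈ intPoly R K) (hGmem : G ∈ intPoly R K)
    (hFprim : fixDivK R K F = ⊤) (hGprim : fixDivK R K G = ⊤)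
    (hFf : (Ideal.span {F} : Ideal (Polynomial K)) = Ideal.span {f})
    (hGg : (Ideal.span {G} : Ideal (Polynomial K)) = Ideal.span {g})
    (n : ℕ) (hn : 1 ≤ n) :
    g = f ^ n ↔ Associated (⟨G, hGmem⟩ : intPoly R K) ((⟨F, hFmem⟩ : intPoly R K) ^ n) := by
  have hFf' : Associated F f := Ideal.span_singleton_eq_span_singleton.mp hFf
  have hGg' : Associated G g := Ideal.span_singleton_eq_span_singleton.mp hGg
  have hinj : Function.Injective (algebraMap R K) := IsFractionRing.injective R K
  constructor
  · intro hgf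
    have h1 : Associated (F ^ n) G := ((hFf'.pow_pow (n := n)).trans
      (hgf ▸ hGg'.symm))
    obtain ⟨w, hw⟩ := h1
    obtain ⟨c, hcu, hcw⟩ := Polynomial.isUnit_iff.mp w.isUnit
    have hG : G = F ^ n * C c := by rw [hcw, hw]
    obtain ⟨r, u, hu, hr⟩ := exists_unit_value R K F hFprim
    obtain ⟨s, v, hv, hs⟩ := exists_unit_value R K G hGprim
    obtain ⟨U, hU⟩ := hu
    obtain ⟨a, ha⟩ := hGmem r
    have hcalc : algebraMap R K a = (algebraMap R K u) ^ n * c := by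
      rw [← ha, hG]; simp [hr]
    set b : R := a * (↑U⁻¹ : Rˣ) ^ n with hb
    have hUmul : algebraMap R K u * algebraMap R K (↑U⁻¹ : Rˣ) = 1 := by
      rw [← map_mul, ← hU]
      simp
    have hc : c = algebraMap R K b := by
      have : algebraMap R K b = (algebraMap R K u) ^ n * c *
          (algebraMap R K (↑U⁻¹ : Rˣ)) ^ n := by
        rw [hb, map_mul, map_pow, hcalc]
      rw [this]
      rw [mul_comm ((algebraMap R K u) ^ n) c, mul_assoc, ← mul_pow, hUmul]
      simp
    obtain ⟨a', ha'⟩ := hFmem s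
    have hbu : IsUnit b := by
      have hveq : algebraMap R K v = algebraMap R K (a' ^ n * b) := by
        rw [← hs, hG, map_mul, map_pow]
        simp [ha', hc]
      have : v = a' ^ n * b := hinj hveq
      exact isUnit_of_mul_isUnit_right (this ▸ hv)
    obtain ⟨B, hB⟩ := hbu
    refine ⟨⟨⟨C (algebraMap R K (↑B⁻¹ : Rˣ)), fun t => ⟨(↑B⁻¹ : Rˣ), by simp⟩⟩,
      ⟨C (algebraMap R K (↑B : Rˣ)), fun t => ⟨(↑B : Rˣ), by simp⟩⟩, ?_, ?_⟩, ?_⟩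
    · ext
      push_cast
      rw [← C_mul, ← map_mul]
      simp
    · ext
      push_cast
      rw [← C_mul, ← map_mul]
      simp
    · ext
      push_cast
      rw [hG, hc, ← hB, mul_assoc, ← C_mul, ← map_mul]
      simp
  · intro hGF
    have h2 : Associated G (F ^ n) := by
      have := hGF.map (intPoly R K).subtype
      simpa using this
    have h3 : Associated g (f ^ n) := (hGg'.symm.trans h2).trans (hFf'.pow_pow)
    exact Polynomial.eq_of_monic_of_associated hg (hf.pow n) h3
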